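/- Let M be an MSC over P and Σ, let p, q ∈ P, let π, π' ∈ Π_{p,q}, and let e, f ∈ E_q with e → f and π'→* ≺_e π→* (where π→* denotes π followed by the letter →*). Then π ≼_f π' if and only if last_π(f) = ⊥ or f_{π, →*π'}(f) = f, where →*π' denotes the letter →* followed by π'. -/

import Mathlib

namespace Gossip

/-- Events extended with bottom and top elements. -/
inductive ExtEv (E : Type) : Type where
  | bot : ExtEv E
  | evt (e : E) : ExtEv E
  | top : ExtEv E

/-- A message sequence chart (MSC) over processes `P`, alphabet `A`,
with (finite, nonempty) set of events `E`. -/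
structure MSC (P A E : Type) : Type where
  fintypeE : Fintype E
  nonemptyE : Nonempty E
  loc : E → P
  lab : E → A
  /-- process successor relation `→` -/
  next : E → E → Prop
  /-- message relation `◁` -/
  msg : E → E → Prop
  next_loc : ∀ {e f : E}, next e f → loc e = loc f
  next_irrefl : ∀ e : E, ¬ next e e
  next_right_unique : ∀ {e f f' : E}, next e f → next e f' → f = f'
  next_left_unique : ∀ {e e' f : E}, next e f → next e' f → e = e'
  next_total : ∀ e f : E, loc e = loc f →
      Relation.ReflTransGen next e f ∨ Relation.ReflTransGen next f e
  msg_loc : ∀ {e f : E}, msg e f → loc e ≠ loc f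
  /-- every event belongs to at most one pair of `◁` -/
  msg_unique : ∀ {e f e' f' : E}, msg e f → msg e' f' →
      (e = e' ∨ e = f' ∨ f = e' ∨ f = f') → e = e' ∧ f = f'
  fifo : ∀ {e f e' f' : E}, msg e f → msg e' f' → loc e = loc e' → loc f = loc f' →
      (Relation.ReflTransGen next e e' ↔ Relation.ReflTransGen next f f')
  /-- `≤ = (→ ∪ ◁)*` is a partial order -/
  causal_antisymm : ∀ {e f : E},
      Relation.ReflTransGen (fun x y => next x y ∨ msg x y) e f →
      Relation.ReflTransGen (fun x y => next x y ∨ msg x y) f e → e = f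

namespace MSC

variable {P A E B : Type}

/-- the causal order `≤ = (→ ∪ ◁)*` -/
def le (M : MSC P A E) : E → E → Prop :=
  Relation.ReflTransGen (fun x y => M.next x y ∨ M.msg x y)

/-- the strict causal order `<` -/
def lt (M : MSC P A E) (e f : E) : Prop := M.le e f ∧ e ≠ f

/-- `→*` -/
def nextStar (M : MSC P A E) : E → E → Prop := Relation.ReflTransGen M.next

/-- the causal order extended to `E ∪ {⊥,⊤}` with `⊥ < e < ⊤` -/
def extLe (M : MSC P A E) : ExtEv E → ExtEv E → Prop
  | .bot, _ => True
  | _, .top => True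
  | .evt e, .evt f => M.le e f
  | _, _ => False

def extLt (M : MSC P A E) (x y : ExtEv E) : Prop := M.extLe x y ∧ x ≠ y

/-- replace the labelling of an MSC (e.g. to pair it with an extra labelling) -/
def relabel (M : MSC P A E) (μ : E → B) : MSC P B E where
  fintypeE := M.fintypeE
  nonemptyE := M.nonemptyE
  loc := M.loc
  lab := μ
  next := M.next
  msg := M.msg
  next_loc := M.next_loc
  next_irrefl := M.next_irrefl
  next_right_unique := M.next_right_unique
  next_left_unique := M.next_left_unique
  next_total := M.next_total
  msg_loc := M.msg_loc
  msg_unique := M.msg_unique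
  fifo := M.fifo
  causal_antisymm := M.causal_antisymm

end MSC

/-- letters of path expressions: `→`, `→*`, `p▷q`, `⟨a⟩` -/
inductive PathLetter (P A : Type) : Type where
  | next : PathLetter P A
  | nextStar : PathLetter P A
  | msg (p q : P) : PathLetter P A
  | lab (a : A) : PathLetter P A

/-- path expressions: finite words over `Γ` -/
abbrev PathExpr (P A : Type) := List (PathLetter P A)

variable {P A E : Type}

def letterSem (M : MSC P A E) : PathLetter P A → E → E → Prop
  | .next => M.next
  | .nextStar => M.nextStar
  | .msg p q => fun e f => M.loc e = p ∧ M.loc f = q ∧ M.msg e f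
  | .lab a => fun e f => e = f ∧ M.lab e = a

/-- `⟦π⟧` -/
def pathSem (M : MSC P A E) : PathExpr P A → E → E → Prop
  | [] => fun e f => e = f
  | l :: π => fun e g => ∃ f, letterSem M l e f ∧ pathSem M π f g

def letterComp : PathLetter P A → P → P → Prop
  | .msg p q => fun x y => x = p ∧ y = q
  | _ => fun x y => x = y

/-- `Comp(π)`; `π ∈ Π_{p,q}` iff `pcomp π p q` -/
def pcomp : PathExpr P A → P → P → Prop
  | [] => fun x y => x = y
  | l :: π => fun x z => ∃ y, letterComp l x y ∧ pcomp π y z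

/-- `IsLast M π e x` holds iff `x = last_π(e)` (with `x = ⊥` iff no `π`-path into `e`). -/
def IsLast (M : MSC P A E) (π : PathExpr P A) (e : E) : ExtEv E → Prop
  | .bot => ∀ f, ¬ pathSem M π f e
  | .evt g => pathSem M π g e ∧ ∀ f, pathSem M π f e → M.le f g
  | .top => False

/-- `IsFirst M π e x` holds iff `x = first_π(e)` (with `x = ⊤` iff no `π`-path out of `e`). -/
def IsFirst (M : MSC P A E) (π : PathExpr P A) (e : E) : ExtEv E → Prop
  | .top => ∀ f, ¬ pathSem M π e f
  | .evt g => pathSem M π e g ∧ ∀ f, pathSem M π e f → M.le g f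
  | .bot => False

/-- `IsFa M π π' e x` holds iff `x = f_{π,π'}(e) = first_{π'}(last_π(e))`, with
`first_{π'}(⊥) := ⊥`. -/
def IsFa (M : MSC P A E) (π π' : PathExpr P A) (e : E) (x : ExtEv E) : Prop :=
  (IsLast M π e ExtEv.bot ∧ x = ExtEv.bot) ∨
    ∃ g, IsLast M π e (ExtEv.evt g) ∧ IsFirst M π' g x

/-- `IsLastProc M p e x` holds iff `x = last_p(e)`, the maximal event of process `p`
strictly below `e` (`⊥` if none). -/
def IsLastProc (M : MSC P A E) (p : P) (e : E) : ExtEv E → Prop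
  | .bot => ∀ f, M.loc f = p → ¬ M.lt f e
  | .evt g => M.loc g = p ∧ M.lt g e ∧ ∀ f, M.loc f = p → M.lt f e → M.le f g
  | .top => False

/-- `π ≼_e π'`, i.e. `last_π(e) ≤ last_{π'}(e)` -/
def ple (M : MSC P A E) (π π' : PathExpr P A) (e : E) : Prop :=
  ∃ x y, IsLast M π e x ∧ IsLast M π' e y ∧ M.extLe x y

def gossipSuffix : P → List P → PathExpr P A
  | _, [] => []
  | p, q :: w => PathLetter.msg p q :: PathLetter.nextStar :: gossipSuffix q w

/-- `π_w` for `w = p :: rest` -/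
def gossipExpr (p : P) (w : List P) : PathExpr P A :=
  match w with
  | [] => [PathLetter.next, PathLetter.nextStar]
  | _ :: _ => PathLetter.nextStar :: gossipSuffix p w

/-- `π ∈ Π^gossip` -/
def IsGossip (π : PathExpr P A) : Prop :=
  ∃ (p : P) (w : List P), (p :: w).Nodup ∧ π = gossipExpr p w

/-- actions of a CFM transition -/
inductive CAct (P A Msg : Type) : Type where
  | internal (a : A) : CAct P A Msg
  | send (a : A) (m : Msg) (q : P) : CAct P A Msg
  | recv (a : A) (m : Msg) (q : P) : CAct P A Msg

def CAct.labelOf {P A Msg : Type} : CAct P A Msg → A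
  | .internal a => a
  | .send a _ _ => a
  | .recv a _ _ => a

/-- a communicating finite-state machine over `P` and `A` -/
structure CFM (P A : Type) : Type 1 where
  Msg : Type
  msgFin : Fintype Msg
  S : Type
  sFin : Fintype S
  ι : P → S
  Δ : P → Set (S × CAct P A Msg × S)
  Acc : Set (P → S)
  wf_send : ∀ p s a m q s', (s, CAct.send a m q, s') ∈ Δ p → q ≠ p
  wf_recv : ∀ p s a m q s', (s, CAct.recv a m q, s') ∈ Δ p → q ≠ p

namespace CFM

variable {P A E : Type}

/-- `ρ` is a run of the CFM `C` on the MSC `M` -/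
def IsRun (C : CFM P A) (M : MSC P A E) (ρ : E → C.S × CAct P A C.Msg × C.S) : Prop :=
  (∀ e, ρ e ∈ C.Δ (M.loc e)) ∧
  (∀ e, ((ρ e).2.1).labelOf = M.lab e) ∧
  (∀ e, (¬ ∃ f, M.next f e) → (ρ e).1 = C.ι (M.loc e)) ∧
  (∀ e f, M.next e f → (ρ e).2.2 = (ρ f).1) ∧
  (∀ e, (¬ ∃ f, M.msg e f) → (¬ ∃ f, M.msg f e) → ∃ a, (ρ e).2.1 = CAct.internal a) ∧
  (∀ e f, M.msg e f → ∃ m, (ρ e).2.1 = CAct.send (M.lab e) m (M.loc f) ∧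
      (ρ f).2.1 = CAct.recv (M.lab f) m (M.loc e))

/-- the run `ρ` is accepting -/
def IsAccepting (C : CFM P A) (M : MSC P A E)
    (ρ : E → C.S × CAct P A C.Msg × C.S) : Prop :=
  ∃ s : P → C.S, s ∈ C.Acc ∧ ∀ p,
    ((∃ e, M.loc e = p) → ∃ e, M.loc e = p ∧ (¬ ∃ f, M.next e f) ∧ s p = (ρ e).2.2) ∧
    ((¬ ∃ e, M.loc e = p) → s p = C.ι p)

/-- `M ∈ L(C)` -/
def Accepts (C : CFM P A) (M : MSC P A E) : Prop :=
  ∃ ρ, C.IsRun M ρ ∧ C.IsAccepting M ρ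

/-- deterministic CFMs -/
def Deterministic (C : CFM P A) : Prop :=
  ∀ p s γ₁ s₁ γ₂ s₂, (s, γ₁, s₁) ∈ C.Δ p → (s, γ₂, s₂) ∈ C.Δ p →
    CAct.labelOf γ₁ = CAct.labelOf γ₂ →
    ((∀ a₁ a₂, γ₁ = CAct.internal a₁ → γ₂ = CAct.internal a₂ → s₁ = s₂) ∧
     (∀ a₁ m₁ a₂ m₂ q, γ₁ = CAct.send a₁ m₁ q → γ₂ = CAct.send a₂ m₂ q →
        s₁ = s₂ ∧ m₁ = m₂) ∧
     (∀ a₁ a₂ m q, γ₁ = CAct.recv a₁ m q → γ₂ = CAct.recv a₂ m q → s₁ = s₂))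

end CFM

/-- acceptance of the extended MSC `(M, ξ)` by a CFM over a product alphabet -/
def AcceptsExt {P A E Ξ : Type} (C : CFM P (A × Ξ)) (M : MSC P A E) (ξ : E → Ξ) : Prop :=
  C.Accepts (M.relabel fun e => (M.lab e, ξ e))

/-- apply `μ` to an extended event, sending both `⊥` and `⊤` to `none` -/
def extToOptMap {E Θ : Type} (μ : E → Θ) : ExtEv E → Option Θ
  | .evt g => some (μ g)
  | _ => none

/-- apply `μ` to an extended event, preserving `⊥` and `⊤` -/
def extMap {E Θ : Type} (μ : E → Θ) : ExtEv E → ExtEv Θ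
  | .bot => ExtEv.bot
  | .evt g => ExtEv.evt (μ g)
  | .top => ExtEv.top

/-- formulas of the temporal logic TL -/
inductive TL (P A : Type) : Type where
  | lab (a : A) : TL P A
  | proc (p : P) : TL P A
  | disj (φ ψ : TL P A) : TL P A
  | neg (φ : TL P A) : TL P A
  | co (φ : TL P A) : TL P A
  | tuntil (φ ψ : TL P A) : TL P A
  | tsince (φ ψ : TL P A) : TL P A

/-- `M, e ⊨ φ` -/
def TLsat (M : MSC P A E) : TL P A → E → Prop
  | .lab a, e => M.lab e = a
  | .proc p, e => M.loc e = p
  | .disj φ ψ, e => TLsat M φ e ∨ TLsat M ψ e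
  | .neg φ, e => ¬ TLsat M φ e
  | .co φ, e => ∃ f, ¬ M.le e f ∧ ¬ M.le f e ∧ TLsat M φ f
  | .tuntil φ ψ, e => ∃ f, M.lt e f ∧ TLsat M ψ f ∧ ∀ g, M.lt e g → M.lt g f → TLsat M φ g
  | .tsince φ ψ, e => ∃ f, M.lt f e ∧ TLsat M ψ f ∧ ∀ g, M.lt f g → M.lt g e → TLsat M φ g

section Aux

variable {P A E : Type}

lemma MSC.nextStar_le (M : MSC P A E) {a b : E} (h : M.nextStar a b) : M.le a b :=
  Relation.ReflTransGen.mono (fun _ _ h => Or.inl h) _ _ h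

lemma MSC.nextStar_loc (M : MSC P A E) {a b : E} (h : M.nextStar a b) :
    M.loc a = M.loc b := by
  induction h with
  | refl => rfl
  | tail _ h ih => exact ih.trans (M.next_loc h)

lemma MSC.le_nextStar (M : MSC P A E) {a b : E} (h : M.le a b)
    (hl : M.loc a = M.loc b) : M.nextStar a b := by
  rcases M.next_total a b hl with h' | h'
  · exact h'
  · have heq := M.causal_antisymm h (M.nextStar_le h')
    subst heq; exact Relation.ReflTransGen.refl

lemma MSC.next_mono (M : MSC P A E) {x m x' m' : E} (h1 : M.next x m)
    (h2 : M.next x' m') (h : M.nextStar m m') : M.nextStar x x' := by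
  rcases Relation.ReflTransGen.cases_tail h with h' | ⟨c, hc, hcm⟩
  · have : x = x' := M.next_left_unique h1 (h' ▸ h2)
    subst this; exact Relation.ReflTransGen.refl
  · have : c = x' := M.next_left_unique hcm h2
    subst this; exact Relation.ReflTransGen.head h1 hc

lemma letterComp_right_unique {l : PathLetter P A} {r s s' : P}
    (h : letterComp l r s) (h' : letterComp l r s') : s = s' := by
  cases l with
  | msg p q => exact h.2.trans h'.2.symm
  | next => exact h.symm.trans h'
  | nextStar => exact h.symm.trans h'
  | lab a => exact h.symm.trans h'

lemma letterComp_left_unique {l : PathLetter P A} {r r' s : P}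
    (h : letterComp l r s) (h' : letterComp l r' s) : r = r' := by
  cases l with
  | msg p q => exact h.1.trans h'.1.symm
  | next => exact h.trans h'.symm
  | nextStar => exact h.trans h'.symm
  | lab a => exact h.trans h'.symm

lemma pcomp_right_unique : ∀ {π : PathExpr P A} {r s s' : P},
    pcomp π r s → pcomp π r s' → s = s' := by
  intro π
  induction π with
  | nil => intro r s s' h h'; exact h.symm.trans h'
  | cons l π ih =>
    rintro r s s' ⟨y, hy, h2⟩ ⟨y', hy', h2'⟩
    have : y = y' := letterComp_right_unique hy hy'
    subst this; exact ih h2 h2'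

lemma pcomp_left_unique : ∀ {π : PathExpr P A} {r r' s : P},
    pcomp π r s → pcomp π r' s → r = r' := by
  intro π
  induction π with
  | nil => intro r r' s h h'; exact h.trans h'.symm
  | cons l π ih =>
    rintro r r' s ⟨y, hy, h2⟩ ⟨y', hy', h2'⟩
    have : y = y' := ih h2 h2'
    subst this; exact letterComp_left_unique hy hy'

lemma pathSem_pcomp (M : MSC P A E) : ∀ {π : PathExpr P A} {x y : E},
    pathSem M π x y → pcomp π (M.loc x) (M.loc y) := by
  intro π
  induction π with
  | nil => intro x y h; exact congrArg M.loc h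
  | cons l π ih =>
    rintro x y ⟨m, hl, hp⟩
    refine ⟨M.loc m, ?_, ih hp⟩
    cases l with
    | next => exact M.next_loc hl
    | nextStar => exact M.nextStar_loc hl
    | msg p q => exact ⟨hl.1, hl.2.1⟩
    | lab a => exact congrArg M.loc hl.1

lemma pathSem_append (M : MSC P A E) : ∀ {σ τ : PathExpr P A} {x z : E},
    pathSem M (σ ++ τ) x z ↔ ∃ y, pathSem M σ x y ∧ pathSem M τ y z := by
  intro σ
  induction σ with
  | nil =>
    intro τ x z
    constructor
    · intro h; exact ⟨x, rfl, h⟩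
    · rintro ⟨y, rfl, h⟩; exact h
  | cons l σ ih =>
    intro τ x z
    constructor
    · rintro ⟨m, hl, hp⟩
      obtain ⟨y, h1, h2⟩ := ih.mp hp
      exact ⟨y, ⟨m, hl, h1⟩, h2⟩
    · rintro ⟨y, ⟨m, hl, h1⟩, h2⟩
      exact ⟨m, hl, ih.mpr ⟨y, h1, h2⟩⟩

/-- Key "lifting" lemma: if `(x,y), (x',y') ∈ ⟦π⟧` and `y →* y'`, then the larger
of `x, x'` is also a `π`-predecessor of `y'`. -/
lemma pathSem_lift (M : MSC P A E) : ∀ {π : PathExpr P A} {x y x' y' : E},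
    pathSem M π x y → pathSem M π x' y' → M.nextStar y y' →
    ∃ x'', M.nextStar x x'' ∧ (x'' = x ∨ x'' = x') ∧ pathSem M π x'' y' := by
  intro π
  induction π with
  | nil =>
    intro x y x' y' h h' hy
    subst h; subst h'
    exact ⟨x', hy, Or.inr rfl, rfl⟩
  | cons l π ih =>
    rintro x y x' y' ⟨m, hl, hp⟩ ⟨m', hl', hp'⟩ hy
    obtain ⟨m'', hm, hcases, hp''⟩ := ih hp hp' hy
    cases l with
    | nextStar =>
      exact ⟨x, Relation.ReflTransGen.refl, Or.inl rfl, m'',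
        Relation.ReflTransGen.trans hl hm, hp''⟩
    | next =>
      rcases hcases with rfl | rfl
      · exact ⟨x, Relation.ReflTransGen.refl, Or.inl rfl, m'', hl, hp''⟩
      · exact ⟨x', M.next_mono hl hl' hm, Or.inr rfl, m'', hl', hp''⟩
    | lab a =>
      rcases hcases with rfl | rfl
      · exact ⟨x, Relation.ReflTransGen.refl, Or.inl rfl, m'', hl, hp''⟩
      · refine ⟨x', ?_, Or.inr rfl, m'', hl', hp''⟩
        rw [hl.1, hl'.1]; exact hm
    | msg p q =>
      rcases hcases with rfl | rfl
      · exact ⟨x, Relation.ReflTransGen.refl, Or.inl rfl, m'', hl, hp''⟩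
      · refine ⟨x', ?_, Or.inr rfl, m'', hl', hp''⟩
        exact (M.fifo hl.2.2 hl'.2.2 (hl.1.trans hl'.1.symm)
          (hl.2.1.trans hl'.2.1.symm)).mpr hm

end Aux

end Gossip
open Gossip in
/-- Lemma 3.2: if `e → f` and `π'→* ≺_e π→*`, then
`π ≼_f π'` iff `last_π(f) = ⊥` or `f_{π, →*π'}(f) = f`. -/
theorem stmt7 {P A E : Type} [Fintype P] [Fintype A] (M : MSC P A E)
    (p q : P) (π π' : PathExpr P A)
    (hπ : pcomp π p q) (hπ' : pcomp π' p q)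
    (e f : E) (he : M.loc e = q) (hf : M.loc f = q) (hef : M.next e f)
    (u v : ExtEv E)
    (hu : IsLast M (π' ++ [PathLetter.nextStar]) e u)
    (hv : IsLast M (π ++ [PathLetter.nextStar]) e v)
    (huv : M.extLt u v)
    (x x' z : ExtEv E)
    (hx : IsLast M π f x) (hx' : IsLast M π' f x')
    (hz : IsFa M π (PathLetter.nextStar :: π') f z) :
    M.extLe x x' ↔ (x = ExtEv.bot ∨ z = ExtEv.evt f) := by
  constructor
  · intro hxx'
    cases x with
    | top => exact hx.elim
    | bot => exact Or.inl rfl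
    | evt g =>
      right
      obtain ⟨hgf, hgmax⟩ := hx
      cases x' with
      | bot => exact hxx'.elim
      | top => exact hx'.elim
      | evt g'' =>
        obtain ⟨hg'f, hg'max⟩ := hx'
        have hxx' : M.le g g'' := hxx'
        -- locations
        have hlg : M.loc g = p := by
          have h1 := pathSem_pcomp M hgf
          rw [hf] at h1
          exact pcomp_left_unique h1 hπ
        have hlg'' : M.loc g'' = p := by
          have h1 := pathSem_pcomp M hg'f
          rw [hf] at h1
          exact pcomp_left_unique h1 hπ'
        have hns : M.nextStar g g'' := M.le_nextStar hxx' (hlg.trans hlg''.symm)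
        have hgf' : pathSem M (PathLetter.nextStar :: π') g f := ⟨g'', hns, hg'f⟩
        rcases hz with ⟨hb, rfl⟩ | ⟨g₀, hg₀, hfirst⟩
        · exact (hb g hgf).elim
        · have hg₀g : g = g₀ := M.causal_antisymm (hg₀.2 g hgf) (hgmax g₀ hg₀.1)
          subst hg₀g
          cases z with
          | bot => exact hfirst.elim
          | top => exact (hfirst f hgf').elim
          | evt h₀ =>
            obtain ⟨hph₀, hmin⟩ := hfirst
            have hh₀f : M.le h₀ f := hmin f hgf'
            have hlh₀ : M.loc h₀ = q := by
              have h1 := pathSem_pcomp M hph₀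
              rw [hlg] at h1
              have h2 : pcomp (PathLetter.nextStar :: π') p q := ⟨p, rfl, hπ'⟩
              exact pcomp_right_unique h1 h2
            have hns₀ : M.nextStar h₀ f := M.le_nextStar hh₀f (hlh₀.trans hf.symm)
            rcases Relation.ReflTransGen.cases_tail hns₀ with heq | ⟨c, hc, hce⟩
            · rw [heq]
            · -- h₀ →* c → f with c = e : derive contradiction
              exfalso
              have hce' : c = e := M.next_left_unique hce hef
              rw [hce'] at hc
              obtain ⟨k, hgk, hkh⟩ := hph₀
              have hke : pathSem M (π' ++ [PathLetter.nextStar]) k e :=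
                (pathSem_append M).mpr ⟨h₀, hkh, ⟨e, hc, rfl⟩⟩
              cases u with
              | top => exact hu
              | bot => exact hu k hke
              | evt u₀ =>
                obtain ⟨hule, hune⟩ := huv
                cases v with
                | bot => exact hule
                | top => exact hv
                | evt v₀ =>
                  have hule : M.le u₀ v₀ := hule
                  obtain ⟨pv, vmax⟩ := hv
                  obtain ⟨h₁, hvh₁, hh₁e⟩ := (pathSem_append M).mp pv
                  obtain ⟨m₁, hm₁, hm₁e⟩ := hh₁e
                  have hh₁f : M.nextStar h₁ f :=
                    Relation.ReflTransGen.tail (hm₁e ▸ hm₁) hef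
                  obtain ⟨x'', hvx, _, hx''f⟩ := pathSem_lift M hvh₁ hgf hh₁f
                  have hvg : M.le v₀ g :=
                    Relation.ReflTransGen.trans (M.nextStar_le hvx) (hgmax x'' hx''f)
                  have hku : M.le k u₀ := (hu).2 k hke
                  have hgv : M.le g v₀ :=
                    Relation.ReflTransGen.trans (M.nextStar_le hgk)
                      (Relation.ReflTransGen.trans hku hule)
                  have hgveq : g = v₀ := M.causal_antisymm hgv hvg
                  have hvu : M.le v₀ u₀ := by
                    rw [← hgveq]
                    exact Relation.ReflTransGen.trans (M.nextStar_le hgk) hku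
                  exact hune (congrArg ExtEv.evt (M.causal_antisymm hule hvu))
  · rintro (rfl | hzf)
    · cases x' <;> exact trivial
    · rcases hz with ⟨_, hzb⟩ | ⟨g₀, hg₀, hfirst⟩
      · rw [hzf] at hzb; cases hzb
      · subst hzf
        obtain ⟨hpf, _⟩ := hfirst
        obtain ⟨k, hgk, hkf⟩ := hpf
        cases x with
        | bot => cases x' <;> exact trivial
        | top => exact hx.elim
        | evt g =>
          have hg : g = g₀ := M.causal_antisymm (hg₀.2 g hx.1) (hx.2 g₀ hg₀.1)
          cases x' with
          | bot => exact (hx' k hkf).elim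
          | top => exact hx'.elim
          | evt g'' =>
            show M.le g g''
            subst hg
            exact Relation.ReflTransGen.trans (M.nextStar_le hgk) (hx'.2 k hkf)
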